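/- For every idealised conformity measure A and every significance level ε ∈ (0,1): E_{x,τ}[|Γ_A^ε(x,τ)|] = E_{(x,y),τ}[|Γ_A^ε(x,τ)\{y}|] + (1 − ε); equivalently, Prob_{(x,y),τ}(y ∈ Γ_A^ε(x,τ)) = 1 − ε. -/

import Mathlib

noncomputable section Conformal

open Finset

variable {X Y : Type*} [Fintype X] [Fintype Y] [DecidableEq Y]

/-- The p-value `p_A(x,y,τ) = Q{z : A z < A (x,y)} + τ·Q{z : A z = A (x,y)}`. -/
def pValue (Q A : X × Y → ℝ) (x : X) (y : Y) (τ : ℝ) : ℝ :=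
  (∑ z : X × Y, if A z < A (x, y) then Q z else 0)
    + τ * ∑ z : X × Y, if A z = A (x, y) then Q z else 0

/-- The prediction set `Γ_A^ε(x,τ) = {y : p_A(x,y,τ) > ε}`. -/
def predSet (Q A : X × Y → ℝ) (ε : ℝ) (x : X) (τ : ℝ) : Finset Y :=
  Finset.univ.filter fun y => ε < pValue Q A x y τ

/-- The marginal `Q_X` of `Q` on the object space. -/
def margX (Q : X × Y → ℝ) (x : X) : ℝ := ∑ y, Q (x, y)

/-- The marginal `Q_Y` of `Q` on the label space. -/
def margY (Q : X × Y → ℝ) (y : Y) : ℝ := ∑ x, Q (x, y)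

/-- The conditional probability `Q(y|x)`; as a function of `z = (x,y)` this is the
CP idealised conformity measure. -/
def condQ (Q : X × Y → ℝ) (z : X × Y) : ℝ := Q z / margX Q z.1

/-- Expectation `E_{x,τ}` with `x ~ Q_X` and `τ` uniform on `[0,1]`, independent. -/
def expXT (Q : X × Y → ℝ) (g : X → ℝ → ℝ) : ℝ :=
  ∑ x, margX Q x * ∫ τ in (0:ℝ)..1, g x τ

/-- Expectation `E_{(x,y),τ}` with `(x,y) ~ Q` and `τ` uniform on `[0,1]`, independent. -/
def expZT (Q : X × Y → ℝ) (g : X × Y → ℝ → ℝ) : ℝ :=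
  ∑ z, Q z * ∫ τ in (0:ℝ)..1, g z τ

open Classical in
/-- Probability `Prob_{x,τ}` with `x ~ Q_X` and `τ` uniform on `[0,1]`, independent. -/
def probXT (Q : X × Y → ℝ) (P : X → ℝ → Prop) : ℝ :=
  expXT Q fun x τ => if P x τ then 1 else 0

open Classical in
/-- Probability `Prob_{(x,y),τ}` with `(x,y) ~ Q` and `τ` uniform on `[0,1]`, independent. -/
def probZT (Q : X × Y → ℝ) (P : X × Y → ℝ → Prop) : ℝ :=
  expZT Q fun z τ => if P z τ then 1 else 0

/-- `A` is a refinement of `B`. -/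
def Refines (A B : X × Y → ℝ) : Prop :=
  ∀ z1 z2 : X × Y, B z1 < B z2 → A z1 < A z2

/-- `max_{y' ≠ y} p_A(x,y',τ)`. -/
def maxOther (Q A : X × Y → ℝ) (x : X) (y : Y) (τ : ℝ) : ℝ :=
  ⨆ y' : {y' : Y // y' ≠ y}, pValue Q A x y'.1 τ

/-- The unconfidence `min_y max_{y' ≠ y} p_A(x,y',τ)`. -/
def unconf (Q A : X × Y → ℝ) (x : X) (τ : ℝ) : ℝ := ⨅ y : Y, maxOther Q A x y τ

/-- The credibility `max_y p_A(x,y,τ)`. -/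
def maxPV (Q A : X × Y → ℝ) (x : X) (τ : ℝ) : ℝ := ⨆ y : Y, pValue Q A x y τ

/-- The predictability `f(x) = max_y Q(y|x)`. -/
def predictability (Q : X × Y → ℝ) (x : X) : ℝ := ⨆ y : Y, condQ Q (x, y)

/-- `c` is a choice function: `Q(c x | x) = f(x)` for all `x`. -/
def IsChoiceFun (Q : X × Y → ℝ) (c : X → Y) : Prop :=
  ∀ x, condQ Q (x, c x) = predictability Q x

/-- The signed predictability (SP) idealised conformity measure corresponding to `c`. -/
def SPMeasure (Q : X × Y → ℝ) (c : X → Y) : X × Y → ℝ := fun z =>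
  if z.2 = c z.1 then predictability Q z.1 else -predictability Q z.1

/-- The modified conditional probability (MCP) idealised conformity measure
corresponding to `c`. -/
def MCPMeasure (Q : X × Y → ℝ) (c : X → Y) : X × Y → ℝ := fun z =>
  if z.2 = c z.1 then condQ Q z else condQ Q z - 1

/-- The modified signed predictability (MSP) idealised conformity measure
(independent of the choice function: `y = ŷ(x)` iff `Q(y|x) = f(x)` when `f(x) > 1/2`). -/
def MSPMeasure (Q : X × Y → ℝ) : X × Y → ℝ := fun z =>
  if 1 / 2 < predictability Q z.1 then
    if condQ Q z = predictability Q z.1 then predictability Q z.1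
    else -predictability Q z.1
  else 0

/-- S-optimality. -/
def SOpt (Q A : X × Y → ℝ) : Prop :=
  ∀ B : X × Y → ℝ,
    expXT Q (fun x τ => ∑ y, pValue Q A x y τ)
      ≤ expXT Q (fun x τ => ∑ y, pValue Q B x y τ)

/-- N-optimality. -/
def NOpt (Q A : X × Y → ℝ) : Prop :=
  ∀ B : X × Y → ℝ, ∀ ε ∈ Set.Ioo (0:ℝ) 1,
    expXT Q (fun x τ => ((predSet Q A ε x τ).card : ℝ))
      ≤ expXT Q (fun x τ => ((predSet Q B ε x τ).card : ℝ))

/-- OF-optimality. -/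
def OFOpt (Q A : X × Y → ℝ) : Prop :=
  ∀ B : X × Y → ℝ,
    expZT Q (fun z τ => ∑ y' ∈ Finset.univ.erase z.2, pValue Q A z.1 y' τ)
      ≤ expZT Q (fun z τ => ∑ y' ∈ Finset.univ.erase z.2, pValue Q B z.1 y' τ)

/-- OE-optimality. -/
def OEOpt (Q A : X × Y → ℝ) : Prop :=
  ∀ B : X × Y → ℝ, ∀ ε ∈ Set.Ioo (0:ℝ) 1,
    expZT Q (fun z τ => (((predSet Q A ε z.1 τ).erase z.2).card : ℝ))
      ≤ expZT Q (fun z τ => (((predSet Q B ε z.1 τ).erase z.2).card : ℝ))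

/-- U-optimality. -/
def UOpt (Q A : X × Y → ℝ) : Prop :=
  ∀ B : X × Y → ℝ,
    expXT Q (unconf Q A) < expXT Q (unconf Q B) ∨
      (expXT Q (unconf Q A) = expXT Q (unconf Q B) ∧
        expXT Q (maxPV Q A) ≤ expXT Q (maxPV Q B))

/-- M-optimality. -/
def MOpt (Q A : X × Y → ℝ) : Prop :=
  ∀ B : X × Y → ℝ, ∀ ε ∈ Set.Ioo (0:ℝ) 1,
    probXT Q (fun x τ => 1 < (predSet Q A ε x τ).card)
        < probXT Q (fun x τ => 1 < (predSet Q B ε x τ).card) ∨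
      (probXT Q (fun x τ => 1 < (predSet Q A ε x τ).card)
          = probXT Q (fun x τ => 1 < (predSet Q B ε x τ).card) ∧
        probXT Q (fun x τ => (predSet Q B ε x τ).card = 0)
          ≤ probXT Q (fun x τ => (predSet Q A ε x τ).card = 0))

/-- F-optimality. -/
def FOpt (Q A : X × Y → ℝ) : Prop :=
  ∀ B : X × Y → ℝ,
    expXT Q (fun x τ => (∑ y, pValue Q A x y τ) - maxPV Q A x τ)
        < expXT Q (fun x τ => (∑ y, pValue Q B x y τ) - maxPV Q B x τ) ∨
      (expXT Q (fun x τ => (∑ y, pValue Q A x y τ) - maxPV Q A x τ)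
          = expXT Q (fun x τ => (∑ y, pValue Q B x y τ) - maxPV Q B x τ) ∧
        expXT Q (maxPV Q A) ≤ expXT Q (maxPV Q B))

/-- E-optimality. -/
def EOpt (Q A : X × Y → ℝ) : Prop :=
  ∀ B : X × Y → ℝ, ∀ ε ∈ Set.Ioo (0:ℝ) 1,
    expXT Q (fun x τ => max (((predSet Q A ε x τ).card : ℝ) - 1) 0)
        < expXT Q (fun x τ => max (((predSet Q B ε x τ).card : ℝ) - 1) 0) ∨
      (expXT Q (fun x τ => max (((predSet Q A ε x τ).card : ℝ) - 1) 0)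
          = expXT Q (fun x τ => max (((predSet Q B ε x τ).card : ℝ) - 1) 0) ∧
        probXT Q (fun x τ => (predSet Q B ε x τ).card = 0)
          ≤ probXT Q (fun x τ => (predSet Q A ε x τ).card = 0))

/-- OU-optimality. -/
def OUOpt (Q A : X × Y → ℝ) : Prop :=
  ∀ B : X × Y → ℝ,
    expZT Q (fun z τ => maxOther Q A z.1 z.2 τ)
      ≤ expZT Q (fun z τ => maxOther Q B z.1 z.2 τ)

/-- OM-optimality. -/
def OMOpt (Q A : X × Y → ℝ) : Prop :=
  ∀ B : X × Y → ℝ, ∀ ε ∈ Set.Ioo (0:ℝ) 1,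
    probZT Q (fun z τ => ((predSet Q A ε z.1 τ).erase z.2).Nonempty)
      ≤ probZT Q (fun z τ => ((predSet Q B ε z.1 τ).erase z.2).Nonempty)

end Conformal

open MeasureTheory Finset

-- indicator form
lemma aux_ind_eq (c : ℝ) : (fun τ : ℝ => if c < τ then (1:ℝ) else 0)
    = Set.indicator (Set.Ioi c) (fun _ => 1) := by
  funext τ; by_cases h : c < τ <;> simp [h]

lemma aux_intInt_gen (s : Set ℝ) (hs : MeasurableSet s) :
    IntervalIntegrable (Set.indicator s (fun _ => (1:ℝ))) volume 0 1 := by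
  rw [intervalIntegrable_iff]
  exact (IntegrableOn.indicator (integrableOn_const measure_Ioc_lt_top.ne) hs)

lemma aux_integral (c : ℝ) :
    ∫ τ in (0:ℝ)..1, (if c < τ then (1:ℝ) else 0) = 1 - min 1 (max 0 c) := by
  rw [aux_ind_eq, intervalIntegral.integral_of_le zero_le_one,
    MeasureTheory.setIntegral_indicator measurableSet_Ioi]
  have h : Set.Ioc 0 1 ∩ Set.Ioi c = Set.Ioc (max c 0) 1 := by
    ext τ
    simp only [Set.mem_inter_iff, Set.mem_Ioi, Set.mem_Ioc, max_lt_iff]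
    tauto
  rw [h, MeasureTheory.setIntegral_const, smul_eq_mul, mul_one, measureReal_def, Real.volume_Ioc,
    ENNReal.toReal_ofReal']
  rcases le_total c 0 with h0 | h0
  · rw [max_eq_right h0, max_eq_left h0]; norm_num
  · rw [max_eq_left h0, max_eq_right h0]
    rcases le_total c 1 with h1 | h1
    · rw [min_eq_right h1, max_eq_left (by linarith)]
    · rw [min_eq_left h1, max_eq_right (by linarith)]; norm_num

lemma aux_intInt (ε L W : ℝ) :
    IntervalIntegrable (fun τ : ℝ => if ε < L + τ*W then (1:ℝ) else 0) volume 0 1 := by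
  have hs : MeasurableSet {τ : ℝ | ε < L + τ*W} :=
    measurableSet_lt measurable_const (by fun_prop)
  have h : (fun τ : ℝ => if ε < L + τ*W then (1:ℝ) else 0)
      = Set.indicator {τ : ℝ | ε < L + τ*W} (fun _ => 1) := by
    funext τ; by_cases h : ε < L + τ*W <;> simp [h, Set.indicator_apply]
  rw [h]
  exact aux_intInt_gen _ hs

lemma aux_keylem (ε L W : ℝ) (hW : 0 ≤ W) :
    W * ∫ τ in (0:ℝ)..1, (if ε < L + τ*W then (1:ℝ) else 0)
      = W - (min ε (L+W) - min ε L) := by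
  rcases eq_or_lt_of_le hW with h | h
  · rw [← h]; simp
  · have hiff : ∀ τ : ℝ, (ε < L + τ*W) ↔ ((ε - L)/W < τ) := by
      intro τ; rw [div_lt_iff₀ h]; constructor <;> intro <;> linarith
    have heq : (fun τ : ℝ => if ε < L + τ*W then (1:ℝ) else 0)
        = fun τ => if (ε-L)/W < τ then 1 else 0 := by
      funext τ; simp only [hiff τ]
    rw [heq, aux_integral]
    rcases le_total ε L with h1 | h1
    · have hc : (ε - L)/W ≤ 0 := div_nonpos_of_nonpos_of_nonneg (by linarith) hW
      rw [max_eq_left hc, min_eq_right (zero_le_one (α:=ℝ)),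
        min_eq_left (h1.trans (by linarith : L ≤ L + W)), min_eq_left h1]
      ring
    · rcases le_total ε (L+W) with h2 | h2
      · have hc0 : (0:ℝ) ≤ (ε-L)/W := div_nonneg (by linarith) hW
        have hc1 : (ε-L)/W ≤ 1 := (div_le_one h).mpr (by linarith)
        rw [max_eq_right hc0, min_eq_right hc1, min_eq_left h2, min_eq_right h1,
          mul_sub, mul_one, mul_div_cancel₀ _ (ne_of_gt h)]
      · have hc1 : (1:ℝ) ≤ (ε-L)/W := (one_le_div h).mpr (by linarith)
        rw [max_eq_right (by linarith : (0:ℝ) ≤ (ε-L)/W), min_eq_left hc1,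
          min_eq_right h2, min_eq_right h1]
        ring

lemma aux_telescope (ε : ℝ) (hε : 0 ≤ ε) (w : ℝ → ℝ) (s : Finset ℝ) :
    ∑ a ∈ s, (min ε ((∑ b ∈ s.filter (· < a), w b) + w a)
        - min ε (∑ b ∈ s.filter (· < a), w b))
      = min ε (∑ a ∈ s, w a) := by
  classical
  induction s using Finset.induction_on_max with
  | empty => simp [min_eq_right hε]
  | insert a s hmax ih =>
    have ha : a ∉ s := fun h => lt_irrefl a (hmax a h)
    have hfa : (insert a s).filter (· < a) = s := by
      rw [filter_insert, if_neg (lt_irrefl a)]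
      exact filter_true_of_mem (fun x hx => hmax x hx)
    have hfb : ∀ b ∈ s, (insert a s).filter (· < b) = s.filter (· < b) := by
      intro b hb; rw [filter_insert, if_neg (not_lt.mpr (hmax b hb).le)]
    have hsum : ∑ x ∈ s, (min ε ((∑ b ∈ (insert a s).filter (· < x), w b) + w x)
        - min ε (∑ b ∈ (insert a s).filter (· < x), w b))
        = min ε (∑ x ∈ s, w x) := by
      rw [← ih]
      exact Finset.sum_congr rfl (fun b hb => by rw [hfb b hb])
    rw [sum_insert ha, sum_insert ha, hfa, hsum, sub_add_cancel, add_comm (w a)]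

section AuxProb
open MeasureTheory Finset
variable {X Y : Type*} [Fintype X] [Fintype Y] [DecidableEq Y]

lemma aux_prob (Q A : X × Y → ℝ) (hQ0 : ∀ z, 0 ≤ Q z) (hQ1 : ∑ z : X × Y, Q z = 1)
    (ε : ℝ) (hε : 0 ≤ ε) (hε1 : ε ≤ 1) :
    ∑ z : X × Y, Q z * ∫ τ in (0:ℝ)..1, (if ε < pValue Q A z.1 z.2 τ then (1:ℝ) else 0)
      = 1 - ε := by
  classical
  set Lv : ℝ → ℝ := fun a => ∑ z : X × Y, if A z < a then Q z else 0 with hLv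
  set Wv : ℝ → ℝ := fun a => ∑ z : X × Y, if A z = a then Q z else 0 with hWv
  have hpv : ∀ z : X × Y, ∀ τ : ℝ, pValue Q A z.1 z.2 τ = Lv (A z) + τ * Wv (A z) := by
    intro z τ; simp [pValue, hLv, hWv]
  set I : ℝ → ℝ := fun a => ∫ τ in (0:ℝ)..1, (if ε < Lv a + τ * Wv a then (1:ℝ) else 0)
    with hI
  have hint : ∀ z : X × Y,
      (∫ τ in (0:ℝ)..1, (if ε < pValue Q A z.1 z.2 τ then (1:ℝ) else 0)) = I (A z) := by
    intro z
    apply intervalIntegral.integral_congr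
    intro τ _
    simp only [hpv]
  simp_rw [hint]
  set vals : Finset ℝ := Finset.univ.image A with hvals
  have hmem : ∀ z : X × Y, A z ∈ vals := fun z => mem_image_of_mem A (mem_univ z)
  have hmap : ∀ z ∈ (Finset.univ : Finset (X × Y)), A z ∈ vals := fun z _ => hmem z
  rw [← Finset.sum_fiberwise_of_maps_to hmap (fun z => Q z * I (A z))]
  have hWnn : ∀ a : ℝ, 0 ≤ Wv a := by
    intro a
    apply Finset.sum_nonneg
    intro z _
    split <;> simp [hQ0 z]
  have hWfib : ∀ a : ℝ, Wv a = ∑ z ∈ Finset.univ.filter (fun z => A z = a), Q z := by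
    intro a; rw [hWv]; rw [Finset.sum_filter]
  have hfib : ∀ a ∈ vals,
      (∑ z ∈ Finset.univ.filter (fun z => A z = a), Q z * I (A z)) = Wv a * I a := by
    intro a _
    rw [hWfib, Finset.sum_mul]
    apply Finset.sum_congr rfl
    intro z hz
    rw [(Finset.mem_filter.mp hz).2]
  rw [Finset.sum_congr rfl hfib]
  have hLrep : ∀ a : ℝ, Lv a = ∑ b ∈ vals.filter (· < a), Wv b := by
    intro a
    rw [hLv]
    simp only [hWv]
    rw [Finset.sum_comm]
    apply Finset.sum_congr rfl
    intro z _
    rw [Finset.sum_ite_eq]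
    simp [Finset.mem_filter, hmem z]
  have htot : ∑ a ∈ vals, Wv a = 1 := by
    rw [← hQ1]
    simp only [hWv]
    rw [Finset.sum_comm]
    apply Finset.sum_congr rfl
    intro z _
    rw [Finset.sum_ite_eq]
    simp [hmem z]
  have hkey : ∀ a ∈ vals, Wv a * I a = Wv a - (min ε (Lv a + Wv a) - min ε (Lv a)) := by
    intro a _
    exact aux_keylem ε (Lv a) (Wv a) (hWnn a)
  have h2 : ∑ a ∈ vals, (min ε (Lv a + Wv a) - min ε (Lv a))
      = ∑ a ∈ vals, (min ε ((∑ b ∈ vals.filter (· < a), Wv b) + Wv a)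
          - min ε (∑ b ∈ vals.filter (· < a), Wv b)) := by
    apply Finset.sum_congr rfl
    intro a _
    rw [hLrep a]
  rw [Finset.sum_congr rfl hkey, Finset.sum_sub_distrib, htot, h2,
    aux_telescope ε hε Wv vals, htot, min_eq_left hε1]

lemma aux_intInt_pv (Q A : X × Y → ℝ) (ε : ℝ) (x : X) (y : Y) :
    IntervalIntegrable (fun τ : ℝ => if ε < pValue Q A x y τ then (1:ℝ) else 0)
      MeasureTheory.volume 0 1 :=
  aux_intInt ε (∑ z : X × Y, if A z < A (x,y) then Q z else 0)
    (∑ z : X × Y, if A z = A (x,y) then Q z else 0)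

end AuxProb

/-- `E_(x,τ)[|Γ^ε|] = E_((x,y),τ)[|Γ^ε \ {y}|] + (1 − ε)`; equivalently
`Prob_((x,y),τ)(y ∈ Γ^ε(x,τ)) = 1 − ε`. -/
theorem stmt12 {X Y : Type*} [Fintype X] [Fintype Y] [DecidableEq Y] [Nonempty X]
    (hY : 2 ≤ Fintype.card Y) (Q : X × Y → ℝ) (hQ0 : ∀ z, 0 ≤ Q z)
    (hQ1 : ∑ z : X × Y, Q z = 1) (hQX : ∀ x, 0 < margX Q x) (A : X × Y → ℝ) :
    ∀ ε ∈ Set.Ioo (0:ℝ) 1,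
      expXT Q (fun x τ => ((predSet Q A ε x τ).card : ℝ))
          = expZT Q (fun z τ => (((predSet Q A ε z.1 τ).erase z.2).card : ℝ))
            + (1 - ε) ∧
        probZT Q (fun z τ => z.2 ∈ predSet Q A ε z.1 τ) = 1 - ε := by
  intro ε hε
  obtain ⟨hε0, hε1⟩ := hε
  classical
  have hprob : probZT Q (fun z τ => z.2 ∈ predSet Q A ε z.1 τ) = 1 - ε := by
    unfold probZT expZT
    rw [← aux_prob Q A hQ0 hQ1 ε hε0.le hε1.le]
    apply Finset.sum_congr rfl
    intro z _
    congr 1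
    apply intervalIntegral.integral_congr
    intro τ _
    simp only [predSet, Finset.mem_filter, Finset.mem_univ, true_and]
  refine ⟨?_, hprob⟩
  have hcard : ∀ (x : X) (τ : ℝ), ((predSet Q A ε x τ).card : ℝ)
      = ∑ y : Y, (if ε < pValue Q A x y τ then (1:ℝ) else 0) := by
    intro x τ
    rw [predSet, Finset.card_filter]
    push_cast
    apply Finset.sum_congr rfl
    intro y _
    split <;> simp
  have hcard' : ∀ (z : X × Y) (τ : ℝ), (((predSet Q A ε z.1 τ).erase z.2).card : ℝ)
      = ∑ y ∈ Finset.univ.erase z.2, (if ε < pValue Q A z.1 y τ then (1:ℝ) else 0) := by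
    intro z τ
    rw [predSet, ← Finset.filter_erase, Finset.card_filter]
    push_cast
    apply Finset.sum_congr rfl
    intro y _
    split <;> simp
  have hsplit : ∀ z : X × Y, (∫ τ in (0:ℝ)..1, ((predSet Q A ε z.1 τ).card : ℝ))
      = (∫ τ in (0:ℝ)..1, (((predSet Q A ε z.1 τ).erase z.2).card : ℝ))
        + ∫ τ in (0:ℝ)..1, (if ε < pValue Q A z.1 z.2 τ then (1:ℝ) else 0) := by
    intro z
    rw [intervalIntegral.integral_congr
        (g := fun τ => ∑ y : Y, if ε < pValue Q A z.1 y τ then (1:ℝ) else 0)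
        (fun τ _ => hcard z.1 τ),
      intervalIntegral.integral_congr
        (g := fun τ => ∑ y ∈ Finset.univ.erase z.2,
          if ε < pValue Q A z.1 y τ then (1:ℝ) else 0)
        (fun τ _ => hcard' z τ),
      intervalIntegral.integral_finset_sum (fun y _ => aux_intInt_pv Q A ε z.1 y),
      intervalIntegral.integral_finset_sum (fun y _ => aux_intInt_pv Q A ε z.1 y),
      ← Finset.sum_erase_add _ _ (Finset.mem_univ z.2)]
  unfold expXT expZT
  calc ∑ x, margX Q x * ∫ τ in (0:ℝ)..1, ((predSet Q A ε x τ).card : ℝ)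
      = ∑ z : X × Y, Q z * ∫ τ in (0:ℝ)..1, ((predSet Q A ε z.1 τ).card : ℝ) := by
        rw [Fintype.sum_prod_type]
        apply Finset.sum_congr rfl
        intro x _
        rw [margX, Finset.sum_mul]
    _ = ∑ z : X × Y,
          (Q z * (∫ τ in (0:ℝ)..1, (((predSet Q A ε z.1 τ).erase z.2).card : ℝ))
           + Q z * ∫ τ in (0:ℝ)..1, (if ε < pValue Q A z.1 z.2 τ then (1:ℝ) else 0)) := by
        apply Finset.sum_congr rfl
        intro z _
        rw [hsplit z, mul_add]
    _ = (∑ z : X × Y, Q z * ∫ τ in (0:ℝ)..1, (((predSet Q A ε z.1 τ).erase z.2).card : ℝ))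
          + ∑ z : X × Y, Q z * ∫ τ in (0:ℝ)..1,
              (if ε < pValue Q A z.1 z.2 τ then (1:ℝ) else 0) :=
        Finset.sum_add_distrib
    _ = (∑ z : X × Y, Q z * ∫ τ in (0:ℝ)..1, (((predSet Q A ε z.1 τ).erase z.2).card : ℝ))
          + (1 - ε) := by
        rw [aux_prob Q A hQ0 hQ1 ε hε0.le hε1.le]
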